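/- The additive subgroup of the Lipschitz quaternions L spanned by all products a[b,c]d with a,b,c,d Hurwitz quaternions equals the set of integral linear combinations of the elements ±1±i, ±1±j, ±1±k, ±i±j, ±i±k, ±j±k, which is an index 2 sublattice of L. -/

import Mathlib

noncomputable section

def qi : Quaternion ℝ := ⟨0, 1, 0, 0⟩
def qj : Quaternion ℝ := ⟨0, 0, 1, 0⟩
def qk : Quaternion ℝ := ⟨0, 0, 0, 1⟩

/-- Membership in the Hurwitz order: all coefficients in `ℤ` or all in `ℤ + ½`. -/
def IsHurwitz (x : Quaternion ℝ) : Prop :=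
  (∃ a b c d : ℤ, x = ⟨(a : ℝ), (b : ℝ), (c : ℝ), (d : ℝ)⟩) ∨
  (∃ a b c d : ℤ, x = ⟨(a : ℝ) + 1/2, (b : ℝ) + 1/2, (c : ℝ) + 1/2, (d : ℝ) + 1/2⟩)

/-- The Lipschitz order `L = ℤ⟨1,i,j,k⟩` as an additive subgroup of `ℍ`. -/
def LipschitzLattice : AddSubgroup (Quaternion ℝ) :=
  AddSubgroup.closure {1, qi, qj, qk}

/-- The additive subgroup spanned by all products `a[b,c]d` with `a,b,c,d` Hurwitz. -/
def commProdLattice : AddSubgroup (Quaternion ℝ) :=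
  AddSubgroup.closure {x | ∃ a b c d : Quaternion ℝ,
    IsHurwitz a ∧ IsHurwitz b ∧ IsHurwitz c ∧ IsHurwitz d ∧
    x = a * (b * c - c * b) * d}

/-- The lattice of integral linear combinations of `±1±i, ±1±j, ±1±k, ±i±j, ±i±k, ±j±k`. -/
def evenLattice : AddSubgroup (Quaternion ℝ) :=
  AddSubgroup.closure {1 + qi, 1 - qi, 1 + qj, 1 - qj, 1 + qk, 1 - qk,
    qi + qj, qi - qj, qi + qk, qi - qk, qj + qk, qj - qk}

open scoped Quaternion

namespace CommAux

/-- The Hurwitz unit ω = (1+i+j+k)/2. -/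
def om : Quaternion ℝ := ⟨1/2, 1/2, 1/2, 1/2⟩

lemma hdec {x : Quaternion ℝ} (hx : IsHurwitz x) :
    ∃ p q r s t : ℤ, x = ⟨(p:ℝ) + t/2, (q:ℝ) + t/2, (r:ℝ) + t/2, (s:ℝ) + t/2⟩ := by
  rcases hx with ⟨a,b,c,d,rfl⟩ | ⟨a,b,c,d,rfl⟩
  · exact ⟨a,b,c,d,0, by norm_num; rfl⟩
  · exact ⟨a,b,c,d,1, by norm_num; rfl⟩

lemma mem_even (p q r s m : ℤ) (h : p + q + r + s = 2*m) :
    (⟨(p:ℝ), (q:ℝ), (r:ℝ), (s:ℝ)⟩ : Quaternion ℝ) ∈ evenLattice := by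
  have key : (⟨(p:ℝ), (q:ℝ), (r:ℝ), (s:ℝ)⟩ : Quaternion ℝ)
      = p • (1 + qi : Quaternion ℝ) + (q - p) • (qi + qj) + (m - q) • (qj + qk)
        + (m - q - s) • (qj - qk) := by
    have hr : (r:ℝ) = 2*m - p - q - s := by exact_mod_cast (by omega : r = 2*m - p - q - s)
    ext <;> simp <;> simp [qi, qj, qk, hr] <;> push_cast <;> ring
  rw [key]
  have h1 : (1 + qi : Quaternion ℝ) ∈ evenLattice :=
    AddSubgroup.subset_closure (by simp [Set.mem_insert_iff])
  have h2 : (qi + qj : Quaternion ℝ) ∈ evenLattice :=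
    AddSubgroup.subset_closure (by simp [Set.mem_insert_iff])
  have h3 : (qj + qk : Quaternion ℝ) ∈ evenLattice :=
    AddSubgroup.subset_closure (by simp [Set.mem_insert_iff])
  have h4 : (qj - qk : Quaternion ℝ) ∈ evenLattice :=
    AddSubgroup.subset_closure (by simp [Set.mem_insert_iff])
  exact AddSubgroup.add_mem _ (AddSubgroup.add_mem _ (AddSubgroup.add_mem _
    (AddSubgroup.zsmul_mem _ h1 _) (AddSubgroup.zsmul_mem _ h2 _))
    (AddSubgroup.zsmul_mem _ h3 _)) (AddSubgroup.zsmul_mem _ h4 _)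

/-- Integer lattice with even coordinate sum, as an explicit subgroup. -/
def evenSub : AddSubgroup (Quaternion ℝ) where
  carrier := {x | ∃ p q r s : ℤ, x = ⟨(p:ℝ), (q:ℝ), (r:ℝ), (s:ℝ)⟩ ∧ (p+q+r+s) % 2 = 0}
  zero_mem' := ⟨0,0,0,0, by ext <;> simp, by decide⟩
  add_mem' := by
    rintro x y ⟨p,q,r,s,rfl,h1⟩ ⟨p',q',r',s',rfl,h2⟩
    exact ⟨p+p', q+q', r+r', s+s', by ext <;> push_cast <;> rfl, by omega⟩
  neg_mem' := by
    rintro x ⟨p,q,r,s,rfl,h1⟩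
    exact ⟨-p,-q,-r,-s, by ext <;> push_cast <;> rfl, by omega⟩

/-- Integer lattice, as an explicit subgroup. -/
def intSub : AddSubgroup (Quaternion ℝ) where
  carrier := {x | ∃ p q r s : ℤ, x = ⟨(p:ℝ), (q:ℝ), (r:ℝ), (s:ℝ)⟩}
  zero_mem' := ⟨0,0,0,0, by ext <;> simp⟩
  add_mem' := by
    rintro x y ⟨p,q,r,s,rfl⟩ ⟨p',q',r',s',rfl⟩
    exact ⟨p+p', q+q', r+r', s+s', by ext <;> push_cast <;> rfl⟩
  neg_mem' := by
    rintro x ⟨p,q,r,s,rfl⟩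
    exact ⟨-p,-q,-r,-s, by ext <;> push_cast <;> rfl⟩

lemma even_le : evenLattice ≤ evenSub := by
  rw [evenLattice, AddSubgroup.closure_le]
  rintro x hx
  simp only [Set.mem_insert_iff, Set.mem_singleton_iff] at hx
  rcases hx with rfl|rfl|rfl|rfl|rfl|rfl|rfl|rfl|rfl|rfl|rfl|rfl
  · exact ⟨1,1,0,0, by ext <;> simp <;> simp [qi], by decide⟩
  · exact ⟨1,-1,0,0, by ext <;> simp <;> simp [qi], by decide⟩
  · exact ⟨1,0,1,0, by ext <;> simp <;> simp [qj], by decide⟩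
  · exact ⟨1,0,-1,0, by ext <;> simp <;> simp [qj], by decide⟩
  · exact ⟨1,0,0,1, by ext <;> simp <;> simp [qk], by decide⟩
  · exact ⟨1,0,0,-1, by ext <;> simp <;> simp [qk], by decide⟩
  · exact ⟨0,1,1,0, by ext <;> simp <;> simp [qi,qj], by decide⟩
  · exact ⟨0,1,-1,0, by ext <;> simp <;> simp [qi,qj], by decide⟩
  · exact ⟨0,1,0,1, by ext <;> simp <;> simp [qi,qk], by decide⟩
  · exact ⟨0,1,0,-1, by ext <;> simp <;> simp [qi,qk], by decide⟩
  · exact ⟨0,0,1,1, by ext <;> simp <;> simp [qj,qk], by decide⟩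
  · exact ⟨0,0,1,-1, by ext <;> simp <;> simp [qj,qk], by decide⟩

lemma lip_le_int : LipschitzLattice ≤ intSub := by
  rw [LipschitzLattice, AddSubgroup.closure_le]
  rintro x hx
  simp only [Set.mem_insert_iff, Set.mem_singleton_iff] at hx
  rcases hx with rfl|rfl|rfl|rfl
  · exact ⟨1,0,0,0, by ext <;> simp⟩
  · exact ⟨0,1,0,0, by ext <;> simp <;> simp [qi]⟩
  · exact ⟨0,0,1,0, by ext <;> simp <;> simp [qj]⟩
  · exact ⟨0,0,0,1, by ext <;> simp <;> simp [qk]⟩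

lemma mk_inj {p q r s p' q' r' s' : ℤ}
    (h : (⟨(p:ℝ), (q:ℝ), (r:ℝ), (s:ℝ)⟩ : Quaternion ℝ) = ⟨(p':ℝ), (q':ℝ), (r':ℝ), (s':ℝ)⟩) :
    p = p' ∧ q = q' ∧ r = r' ∧ s = s' := by
  rw [QuaternionAlgebra.mk.injEq] at h
  exact ⟨by exact_mod_cast h.1, by exact_mod_cast h.2.1,
    by exact_mod_cast h.2.2.1, by exact_mod_cast h.2.2.2⟩

lemma even_iff (p q r s : ℤ) :
    (⟨(p:ℝ), (q:ℝ), (r:ℝ), (s:ℝ)⟩ : Quaternion ℝ) ∈ evenLattice ↔ (p+q+r+s) % 2 = 0 := by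
  constructor
  · intro h
    obtain ⟨p',q',r',s',heq,hm⟩ := even_le h
    obtain ⟨rfl,rfl,rfl,rfl⟩ := mk_inj heq
    exact hm
  · intro h
    exact mem_even p q r s ((p+q+r+s)/2) (by omega)

lemma comm_mem {b c : Quaternion ℝ} (hb : IsHurwitz b) (hc : IsHurwitz c) :
    b * c - c * b ∈ evenLattice := by
  obtain ⟨q,r,s,e,t, rfl⟩ := hdec hb
  obtain ⟨qq,rr,ss,ee,u, rfl⟩ := hdec hc
  have key : (⟨(q:ℝ)+t/2,(r:ℝ)+t/2,(s:ℝ)+t/2,(e:ℝ)+t/2⟩ : Quaternion ℝ) *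
        ⟨(qq:ℝ)+u/2,(rr:ℝ)+u/2,(ss:ℝ)+u/2,(ee:ℝ)+u/2⟩ -
      (⟨(qq:ℝ)+u/2,(rr:ℝ)+u/2,(ss:ℝ)+u/2,(ee:ℝ)+u/2⟩ : Quaternion ℝ) *
        ⟨(q:ℝ)+t/2,(r:ℝ)+t/2,(s:ℝ)+t/2,(e:ℝ)+t/2⟩
      = ⟨((0:ℤ):ℝ),
         ((2*s*ee - 2*ss*e + s*u - ss*t - e*u + ee*t : ℤ):ℝ),
         ((-2*r*ee + 2*rr*e - r*u + rr*t + e*u - ee*t : ℤ):ℝ),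
         ((2*r*ss - 2*rr*s + r*u - rr*t - s*u + ss*t : ℤ):ℝ)⟩ := by
    ext <;> simp [Quaternion.re_mul, Quaternion.imI_mul, Quaternion.imJ_mul,
      Quaternion.imK_mul] <;> push_cast <;> ring
  erw [key]
  exact mem_even _ _ _ _ (s*ee - ss*e - r*ee + rr*e + r*ss - rr*s) (by ring)

lemma mul_right_mem {x d : Quaternion ℝ} (hd : IsHurwitz d) (hx : x ∈ evenLattice) :
    x * d ∈ evenLattice := by
  obtain ⟨p,q,r,s,rfl,hm⟩ := even_le hx
  obtain ⟨u,v,w,z,t, rfl⟩ := hdec hd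
  obtain ⟨m, hm2⟩ : ∃ m, p = 2*m - q - r - s := ⟨(p+q+r+s)/2, by omega⟩
  subst hm2
  have key : (⟨((2*m-q-r-s : ℤ):ℝ), (q:ℝ), (r:ℝ), (s:ℝ)⟩ : Quaternion ℝ) *
        ⟨(u:ℝ)+t/2,(v:ℝ)+t/2,(w:ℝ)+t/2,(z:ℝ)+t/2⟩
      = ⟨((m*t + 2*m*u - q*t - q*u - q*v - r*t - r*u - r*w - s*t - s*u - s*z : ℤ):ℝ),
         ((m*t + 2*m*v + q*u - q*v - r*v + r*z - s*t - s*v - s*w : ℤ):ℝ),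
         ((m*t + 2*m*w - q*t - q*w - q*z + r*u - r*w + s*v - s*w : ℤ):ℝ),
         ((m*t + 2*m*z + q*w - q*z - r*t - r*v - r*z + s*u - s*z : ℤ):ℝ)⟩ := by
    ext <;> simp [Quaternion.re_mul, Quaternion.imI_mul, Quaternion.imJ_mul,
      Quaternion.imK_mul] <;> push_cast <;> ring
  erw [key]
  exact mem_even _ _ _ _
    (2*m*t + m*u + m*v + m*w + m*z - q*t - q*v - q*z - r*t - r*v - r*w - s*t - s*w - s*z)
    (by ring)

lemma mul_left_mem {x a : Quaternion ℝ} (ha : IsHurwitz a) (hx : x ∈ evenLattice) :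
    a * x ∈ evenLattice := by
  obtain ⟨p,q,r,s,rfl,hm⟩ := even_le hx
  obtain ⟨u,v,w,z,t, rfl⟩ := hdec ha
  obtain ⟨m, hm2⟩ : ∃ m, p = 2*m - q - r - s := ⟨(p+q+r+s)/2, by omega⟩
  subst hm2
  have key : (⟨(u:ℝ)+t/2,(v:ℝ)+t/2,(w:ℝ)+t/2,(z:ℝ)+t/2⟩ : Quaternion ℝ) *
        ⟨((2*m-q-r-s : ℤ):ℝ), (q:ℝ), (r:ℝ), (s:ℝ)⟩
      = ⟨((m*t + 2*m*u - q*t - q*u - q*v - r*t - r*u - r*w - s*t - s*u - s*z : ℤ):ℝ),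
         ((m*t + 2*m*v + q*u - q*v - r*t - r*v - r*z - s*v + s*w : ℤ):ℝ),
         ((m*t + 2*m*w - q*w + q*z + r*u - r*w - s*t - s*v - s*w : ℤ):ℝ),
         ((m*t + 2*m*z - q*t - q*w - q*z + r*v - r*z + s*u - s*z : ℤ):ℝ)⟩ := by
    ext <;> simp [Quaternion.re_mul, Quaternion.imI_mul, Quaternion.imJ_mul,
      Quaternion.imK_mul] <;> push_cast <;> ring
  erw [key]
  exact mem_even _ _ _ _
    (2*m*t + m*u + m*v + m*w + m*z - q*t - q*v - q*w - r*t - r*w - r*z - s*t - s*v - s*z)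
    (by ring)

lemma comm_le_even : commProdLattice ≤ evenLattice := by
  rw [commProdLattice, AddSubgroup.closure_le]
  rintro x ⟨a,b,c,d,ha,hb,hc,hd,rfl⟩
  exact mul_right_mem hd (mul_left_mem ha (comm_mem hb hc))

-- Hurwitz facts
lemma hH1 : IsHurwitz 1 := Or.inl ⟨1,0,0,0, by ext <;> simp⟩
lemma hHom : IsHurwitz om := Or.inr ⟨0,0,0,0, by ext <;> simp <;> simp [om]⟩
lemma hHi : IsHurwitz qi := Or.inl ⟨0,1,0,0, by ext <;> simp <;> simp [qi]⟩
lemma hHj : IsHurwitz qj := Or.inl ⟨0,0,1,0, by ext <;> simp <;> simp [qj]⟩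
lemma hHk : IsHurwitz qk := Or.inl ⟨0,0,0,1, by ext <;> simp <;> simp [qk]⟩
lemma hHni : IsHurwitz (-qi) := Or.inl ⟨0,-1,0,0, by ext <;> simp <;> simp [qi]⟩
lemma hHnj : IsHurwitz (-qj) := Or.inl ⟨0,0,-1,0, by ext <;> simp <;> simp [qj]⟩
lemma hHnk : IsHurwitz (-qk) := Or.inl ⟨0,0,0,-1, by ext <;> simp <;> simp [qk]⟩

lemma even_le_comm : evenLattice ≤ commProdLattice := by
  rw [evenLattice, AddSubgroup.closure_le]
  rintro x hx
  simp only [Set.mem_insert_iff, Set.mem_singleton_iff] at hx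
  rw [SetLike.mem_coe]
  have gen : ∀ (a b c d : Quaternion ℝ), IsHurwitz a → IsHurwitz b → IsHurwitz c →
      IsHurwitz d → a * (b * c - c * b) * d ∈ commProdLattice := fun a b c d ha hb hc hd =>
    AddSubgroup.subset_closure ⟨a,b,c,d,ha,hb,hc,hd,rfl⟩
  rcases hx with rfl|rfl|rfl|rfl|rfl|rfl|rfl|rfl|rfl|rfl|rfl|rfl
  · have := gen 1 om qi qk hH1 hHom hHi hHk
    convert this using 1
    ext <;> simp <;> simp [om, qi, qj, qk, Quaternion.re_mul, Quaternion.imI_mul, Quaternion.imJ_mul,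
      Quaternion.imK_mul] <;> norm_num
  · have := gen 1 om qi (-qj) hH1 hHom hHi hHnj
    convert this using 1
    ext <;> simp <;> simp [om, qi, qj, qk, Quaternion.re_mul, Quaternion.imI_mul, Quaternion.imJ_mul,
      Quaternion.imK_mul] <;> norm_num
  · have := gen 1 om qj qi hH1 hHom hHj hHi
    convert this using 1
    ext <;> simp <;> simp [om, qi, qj, qk, Quaternion.re_mul, Quaternion.imI_mul, Quaternion.imJ_mul,
      Quaternion.imK_mul] <;> norm_num
  · have := gen 1 om qj (-qk) hH1 hHom hHj hHnk
    convert this using 1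
    ext <;> simp <;> simp [om, qi, qj, qk, Quaternion.re_mul, Quaternion.imI_mul, Quaternion.imJ_mul,
      Quaternion.imK_mul] <;> norm_num
  · have := gen 1 om qk qj hH1 hHom hHk hHj
    convert this using 1
    ext <;> simp <;> simp [om, qi, qj, qk, Quaternion.re_mul, Quaternion.imI_mul, Quaternion.imJ_mul,
      Quaternion.imK_mul] <;> norm_num
  · have := gen 1 om qk (-qi) hH1 hHom hHk hHni
    convert this using 1
    ext <;> simp <;> simp [om, qi, qj, qk, Quaternion.re_mul, Quaternion.imI_mul, Quaternion.imJ_mul,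
      Quaternion.imK_mul] <;> norm_num
  · have := gen qk om qk 1 hHk hHom hHk hH1
    convert this using 1
    ext <;> simp <;> simp [om, qi, qj, qk, Quaternion.re_mul, Quaternion.imI_mul, Quaternion.imJ_mul,
      Quaternion.imK_mul] <;> norm_num
  · have := gen 1 om qk 1 hH1 hHom hHk hH1
    convert this using 1
    ext <;> simp <;> simp [om, qi, qj, qk, Quaternion.re_mul, Quaternion.imI_mul, Quaternion.imJ_mul,
      Quaternion.imK_mul] <;> norm_num
  · have := gen qj om qj 1 hHj hHom hHj hH1
    convert this using 1
    ext <;> simp <;> simp [om, qi, qj, qk, Quaternion.re_mul, Quaternion.imI_mul, Quaternion.imJ_mul,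
      Quaternion.imK_mul] <;> norm_num
  · have := gen (-1) om qj 1 (Or.inl ⟨-1,0,0,0, by ext <;> simp⟩) hHom hHj hH1
    convert this using 1
    ext <;> simp <;> simp [om, qi, qj, qk, Quaternion.re_mul, Quaternion.imI_mul, Quaternion.imJ_mul,
      Quaternion.imK_mul] <;> norm_num
  · have := gen qi om qi 1 hHi hHom hHi hH1
    convert this using 1
    ext <;> simp <;> simp [om, qi, qj, qk, Quaternion.re_mul, Quaternion.imI_mul, Quaternion.imJ_mul,
      Quaternion.imK_mul] <;> norm_num
  · have := gen 1 om qi 1 hH1 hHom hHi hH1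
    convert this using 1
    ext <;> simp <;> simp [om, qi, qj, qk, Quaternion.re_mul, Quaternion.imI_mul, Quaternion.imJ_mul,
      Quaternion.imK_mul] <;> norm_num

lemma one_mem_lip : (1 : Quaternion ℝ) ∈ LipschitzLattice :=
  AddSubgroup.subset_closure (by simp [Set.mem_insert_iff])
lemma qi_mem_lip : qi ∈ LipschitzLattice :=
  AddSubgroup.subset_closure (by simp [Set.mem_insert_iff])
lemma qj_mem_lip : qj ∈ LipschitzLattice :=
  AddSubgroup.subset_closure (by simp [Set.mem_insert_iff])
lemma qk_mem_lip : qk ∈ LipschitzLattice :=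
  AddSubgroup.subset_closure (by simp [Set.mem_insert_iff])

lemma even_le_lip : evenLattice ≤ LipschitzLattice := by
  rw [evenLattice, AddSubgroup.closure_le]
  rintro x hx
  simp only [Set.mem_insert_iff, Set.mem_singleton_iff] at hx
  rcases hx with rfl|rfl|rfl|rfl|rfl|rfl|rfl|rfl|rfl|rfl|rfl|rfl <;>
    first
    | exact AddSubgroup.add_mem _ one_mem_lip qi_mem_lip
    | exact AddSubgroup.sub_mem _ one_mem_lip qi_mem_lip
    | exact AddSubgroup.add_mem _ one_mem_lip qj_mem_lip
    | exact AddSubgroup.sub_mem _ one_mem_lip qj_mem_lip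
    | exact AddSubgroup.add_mem _ one_mem_lip qk_mem_lip
    | exact AddSubgroup.sub_mem _ one_mem_lip qk_mem_lip
    | exact AddSubgroup.add_mem _ qi_mem_lip qj_mem_lip
    | exact AddSubgroup.sub_mem _ qi_mem_lip qj_mem_lip
    | exact AddSubgroup.add_mem _ qi_mem_lip qk_mem_lip
    | exact AddSubgroup.sub_mem _ qi_mem_lip qk_mem_lip
    | exact AddSubgroup.add_mem _ qj_mem_lip qk_mem_lip
    | exact AddSubgroup.sub_mem _ qj_mem_lip qk_mem_lip

lemma comm_eq_even : commProdLattice = evenLattice :=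
  le_antisymm comm_le_even even_le_comm

lemma relindex_two : evenLattice.relIndex LipschitzLattice = 2 := by
  rw [AddSubgroup.relIndex]
  rw [AddSubgroup.index_eq_two_iff]
  refine ⟨⟨1, one_mem_lip⟩, fun b => ?_⟩
  obtain ⟨p,q,r,s,hx⟩ := lip_le_int b.2
  have hcoe : ((b + ⟨1, one_mem_lip⟩ : LipschitzLattice) : Quaternion ℝ)
      = ⟨((p+1 : ℤ):ℝ), (q:ℝ), (r:ℝ), (s:ℝ)⟩ := by
    push_cast [hx]
    ext <;> simp
    exacts [rfl, add_zero (_ : ℝ), add_zero (_ : ℝ), add_zero (_ : ℝ)]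
  have hmem1 : (b + ⟨1, one_mem_lip⟩) ∈ evenLattice.addSubgroupOf LipschitzLattice ↔
      (p+1+q+r+s) % 2 = 0 := by
    erw [AddSubgroup.mem_addSubgroupOf, hcoe, even_iff]
  have hmem2 : b ∈ evenLattice.addSubgroupOf LipschitzLattice ↔ (p+q+r+s) % 2 = 0 := by
    erw [AddSubgroup.mem_addSubgroupOf, hx, even_iff]
  rcases Int.even_or_odd (p+q+r+s) with h | h
  · have h2 : (p+q+r+s) % 2 = 0 := Int.even_iff.mp h
    exact Or.inr ⟨hmem2.2 h2, fun hc => by have := hmem1.1 hc; omega⟩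
  · have h2 : (p+q+r+s) % 2 = 1 := Int.odd_iff.mp h
    exact Or.inl ⟨hmem1.2 (by omega), fun hc => by have := hmem2.1 hc; omega⟩

end CommAux

/-- The additive subgroup of the Lipschitz quaternions spanned by all products `a[b,c]d`
with `a,b,c,d` Hurwitz equals the integral span of `±1±i, ±1±j, ±1±k, ±i±j, ±i±k, ±j±k`,
and this is an index 2 sublattice of the Lipschitz lattice `L`. -/
theorem commutator_products_index_two :
    commProdLattice = evenLattice ∧
    commProdLattice ≤ LipschitzLattice ∧
    commProdLattice.relIndex LipschitzLattice = 2 := by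
  refine ⟨CommAux.comm_eq_even, ?_, ?_⟩
  · rw [CommAux.comm_eq_even]; exact CommAux.even_le_lip
  · rw [CommAux.comm_eq_even]; exact CommAux.relindex_two
end
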